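/- In a symmetric mixed equilibrium σ of a position-optimization game, for every pseudo-target x ∈ X*, the equilibrium probability satisfies σ(x) ≥ P(x) − 1/n. -/

import Mathlib

open Finset
open scoped ENNReal Classical

noncomputable def closestSet {X Y : Type*} {n : ℕ} (d : X → Y → ℝ≥0∞) (xs : Fin n → X)
    (y : Y) : Finset (Fin n) :=
  Finset.univ.filter fun i => ∀ j, d (xs i) y ≤ d (xs j) y

/-- Player `i`'s share of target `y`: `1/|X_min|` if `i` is among the closest players, else 0. -/
noncomputable def share {X Y : Type*} {n : ℕ} (d : X → Y → ℝ≥0∞) (xs : Fin n → X) (y : Y)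
    (i : Fin n) : ℝ :=
  if i ∈ closestSet d xs y then ((closestSet d xs y).card : ℝ)⁻¹ else 0

/-- Player `i`'s expected utility `E_{y∼Q}[π_i]`. -/
noncomputable def utility {X Y : Type*} [Fintype Y] {n : ℕ} (d : X → Y → ℝ≥0∞) (Q : Y → ℝ)
    (xs : Fin n → X) (i : Fin n) : ℝ :=
  ∑ y, Q y * share d xs y i

/-- The projection `P` of `Q` onto pseudo-targets: `P x = Q({y : x*(y) = x})`. -/
noncomputable def projP {X Y : Type*} [Fintype Y] (Q : Y → ℝ) (xstar : Y → X) (x : X) : ℝ :=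
  ∑ y ∈ Finset.univ.filter (fun y => xstar y = x), Q y

/-- Number of players playing position `x`. -/
noncomputable def kcount {X : Type*} {n : ℕ} (xs : Fin n → X) (x : X) : ℕ :=
  (Finset.univ.filter (fun i => xs i = x)).card

/-- A mixed strategy on a finite position set. -/
def IsDist {X : Type*} [Fintype X] (σ : X → ℝ) : Prop :=
  (∀ x, 0 ≤ σ x) ∧ ∑ x, σ x = 1

/-- Expected utility of player `i` under a mixed strategy profile `σs`. -/
noncomputable def mixedUtility {X Y : Type*} [Fintype X] [Fintype Y] {n : ℕ}
    (d : X → Y → ℝ≥0∞) (Q : Y → ℝ) (σs : Fin n → X → ℝ) (i : Fin n) : ℝ :=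
  ∑ xs : Fin n → X, (∏ j, σs j (xs j)) * utility d Q xs i

/-- Symmetric mixed Nash equilibrium: when all play `σ`, no unilateral mixed deviation helps. -/
def IsSymmNash {X Y : Type*} [Fintype X] [Fintype Y] {n : ℕ} (d : X → Y → ℝ≥0∞) (Q : Y → ℝ)
    (σ : X → ℝ) : Prop :=
  ∀ (i : Fin n) (σ' : X → ℝ), IsDist σ' →
    mixedUtility d Q (Function.update (fun _ => σ) i σ') i ≤
      mixedUtility d Q (fun (_ : Fin n) => σ) i

set_option maxHeartbeats 2000000 in
/-- in a symmetric mixed equilibrium, `σ(x) ≥ P(x) - 1/n` for every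
pseudo-target `x ∈ X*`. -/
theorem symm_nash_lower_bound {X Y : Type*} [Fintype X] [Fintype Y] {n : ℕ}
    (d : X → Y → ℝ≥0∞) (Q : Y → ℝ) (hQ : ∀ y, 0 ≤ Q y) (hQsum : ∑ y, Q y = 1)
    (xstar : Y → X)
    (hmin : ∀ y x', d (xstar y) y ≤ d x' y)
    (huniq : ∀ y, Q y ≠ 0 → ∀ x', d x' y ≤ d (xstar y) y → x' = xstar y)
    (p0 : ℝ) (hp0pos : 0 < p0)
    (hp0le : ∀ y, p0 ≤ projP Q xstar (xstar y))
    (hp0mem : ∃ y, projP Q xstar (xstar y) = p0)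
    (hn : max 43 ((32 / p0) * Real.log (1 / p0)) < n)
    (σ : X → ℝ) (hσ : IsDist σ) (hnash : IsSymmNash (n := n) d Q σ) :
    ∀ x ∈ Set.range xstar, projP Q xstar x - 1 / n ≤ σ x := by

  classical
  intro x _hx
  -- basic facts about n
  have hn43 : (43 : ℝ) < n := lt_of_le_of_lt (le_max_left _ _) hn
  have hnR : (0 : ℝ) < n := by linarith
  have hn0 : 0 < n := by exact_mod_cast hnR
  obtain ⟨hσ0, hσ1⟩ := hσ
  set q := σ x with hqdef
  have hq0 : 0 ≤ q := hσ0 x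
  -- sum over all strategy profiles of a product factors
  have hW : ∀ f : Fin n → X → ℝ,
      ∑ xs : Fin n → X, ∏ j, f j (xs j) = ∏ j, ∑ x', f j x' := by
    intro f
    rw [Finset.prod_univ_sum, Fintype.piFinset_univ]
  -- closest set is nonempty
  have hclosest : ∀ (xs : Fin n → X) y, (closestSet d xs y).Nonempty := by
    intro xs y
    obtain ⟨i, -, hi⟩ := Finset.exists_min_image univ (fun j => d (xs j) y)
      ⟨⟨0, hn0⟩, mem_univ _⟩
    refine ⟨i, ?_⟩
    simp only [closestSet, mem_filter, mem_univ, true_and]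
    exact fun j => hi j (mem_univ j)
  have hshare_nonneg : ∀ (xs : Fin n → X) y (i : Fin n), 0 ≤ share d xs y i := by
    intro xs y i
    unfold share
    split
    · positivity
    · exact le_refl 0
  have hshare_sum : ∀ (xs : Fin n → X) y, ∑ i, share d xs y i = 1 := by
    intro xs y
    have hc : 0 < (closestSet d xs y).card := card_pos.mpr (hclosest xs y)
    unfold share
    rw [Finset.sum_ite_mem, univ_inter, Finset.sum_const, nsmul_eq_mul,
      mul_inv_cancel₀ (by exact_mod_cast hc.ne')]
  have hutil_sum : ∀ xs : Fin n → X, ∑ i, utility d Q xs i = 1 := by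
    intro xs
    unfold utility
    rw [Finset.sum_comm]
    simp_rw [← Finset.mul_sum, hshare_sum, mul_one]
    exact hQsum
  -- the all-σ profile sums to total utility 1, so some player gets ≤ 1/n
  have heq1 : ∑ i, mixedUtility d Q (fun _ : Fin n => σ) i = 1 := by
    unfold mixedUtility
    rw [Finset.sum_comm]
    simp_rw [← Finset.mul_sum, hutil_sum, mul_one]
    rw [hW fun _ => σ]
    simp [hσ1]
  obtain ⟨i, -, hile⟩ : ∃ i ∈ (univ : Finset (Fin n)),
      mixedUtility d Q (fun _ : Fin n => σ) i ≤ 1 / n := by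
    refine Finset.exists_le_of_sum_le ⟨⟨0, hn0⟩, mem_univ _⟩ ?_
    rw [heq1, Finset.sum_const, card_univ, Fintype.card_fin, nsmul_eq_mul]
    rw [mul_one_div, div_self hnR.ne']
  -- the pure deviation to x
  set δ : X → ℝ := fun x' => if x' = x then 1 else 0 with hδdef
  have hδ : IsDist δ := by
    constructor
    · intro x'; simp only [hδdef]; split <;> norm_num
    · simp [hδdef]
  set σs := Function.update (fun _ : Fin n => σ) i δ with hσsdef
  have hσs0 : ∀ j x', 0 ≤ σs j x' := by
    intro j x'
    by_cases h : j = i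
    · subst h; rw [hσsdef, Function.update_self]; exact hδ.1 x'
    · rw [hσsdef, Function.update_of_ne h]; exact hσ0 x'
  have hσssum : ∀ j, ∑ x', σs j x' = 1 := by
    intro j
    by_cases h : j = i
    · subst h; rw [hσsdef, Function.update_self]; exact hδ.2
    · rw [hσsdef, Function.update_of_ne h]; exact hσ1
  have hnash' := hnash i δ hδ
  set m : ℝ := 1 - q + n * q with hmdef
  have hm : 0 < m := by nlinarith [mul_nonneg (by linarith : (0:ℝ) ≤ (n:ℝ) - 1) hq0]
  set c : ℝ := m⁻¹ with hcdef
  have hc0 : 0 < c := inv_pos.mpr hm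
  set p := projP Q xstar x with hpdef
  have hpnn : 0 ≤ p := Finset.sum_nonneg fun y _ => hQ y
  -- pointwise lower bound on the integrand
  have hpoint : ∀ xs : Fin n → X,
      (∏ j, σs j (xs j)) * (p * (2 * c - c ^ 2 * (kcount xs x : ℝ))) ≤
        (∏ j, σs j (xs j)) * utility d Q xs i := by
    intro xs
    by_cases hxi : xs i = x
    · have hWnn : 0 ≤ ∏ j, σs j (xs j) := Finset.prod_nonneg fun j _ => hσs0 j _
      refine mul_le_mul_of_nonneg_left ?_ hWnn
      have hk1 : 1 ≤ kcount xs x := by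
        unfold kcount
        refine Finset.card_pos.mpr ⟨i, ?_⟩
        simp [hxi]
      have hkpos : (0 : ℝ) < (kcount xs x : ℝ) := by exact_mod_cast hk1
      have htangent : 2 * c - c ^ 2 * (kcount xs x : ℝ) ≤ ((kcount xs x : ℝ))⁻¹ := by
        have h1 : (kcount xs x : ℝ) * ((kcount xs x : ℝ))⁻¹ = 1 :=
          mul_inv_cancel₀ hkpos.ne'
        nlinarith [sq_nonneg (1 - c * (kcount xs x : ℝ)), inv_pos.mpr hkpos,
          mul_pos (mul_pos (inv_pos.mpr hkpos) hkpos) hkpos]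
      calc p * (2 * c - c ^ 2 * (kcount xs x : ℝ))
          ≤ p * ((kcount xs x : ℝ))⁻¹ := mul_le_mul_of_nonneg_left htangent hpnn
        _ = ∑ y ∈ univ.filter (fun y => xstar y = x), Q y * ((kcount xs x : ℝ))⁻¹ := by
            rw [← Finset.sum_mul, hpdef, projP]
        _ ≤ ∑ y ∈ univ.filter (fun y => xstar y = x), Q y * share d xs y i := by
            refine Finset.sum_le_sum fun y hy => ?_
            have hyx : xstar y = x := (Finset.mem_filter.mp hy).2
            rcases eq_or_ne (Q y) 0 with hQy | hQy
            · simp [hQy]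
            · have hset : closestSet d xs y = univ.filter (fun j => xs j = x) := by
                ext j
                simp only [closestSet, mem_filter, mem_univ, true_and]
                constructor
                · intro hj
                  have h2 : d (xs j) y ≤ d (xstar y) y := by
                    have := hj i
                    rwa [hxi, ← hyx] at this
                  rw [huniq y hQy _ h2, hyx]
                · intro hj k
                  have : d (xs j) y = d (xstar y) y := by rw [hj, ← hyx]
                  rw [this]
                  exact hmin y (xs k)
              have hi_mem : i ∈ closestSet d xs y := by
                rw [hset]; simp [hxi]
              have : share d xs y i = ((kcount xs x : ℝ))⁻¹ := by
                rw [share, if_pos hi_mem, hset, kcount]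
              rw [this]
        _ ≤ ∑ y, Q y * share d xs y i := by
            refine Finset.sum_le_sum_of_subset_of_nonneg (Finset.filter_subset _ _)
              fun y _ _ => mul_nonneg (hQ y) (hshare_nonneg xs y i)
        _ = utility d Q xs i := rfl
    · have h0 : σs i (xs i) = 0 := by
        rw [hσsdef, Function.update_self, hδdef]
        simp [hxi]
      have hW0 : ∏ j, σs j (xs j) = 0 := Finset.prod_eq_zero (mem_univ i) h0
      simp [hW0]
  -- total mass of the deviation profile
  have hS0 : ∑ xs : Fin n → X, ∏ j, σs j (xs j) = 1 := by
    rw [hW σs]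
    exact Finset.prod_eq_one fun j _ => hσssum j
  -- expected number of players at x under the deviation profile
  have hkc : ∀ xs : Fin n → X, (kcount xs x : ℝ) = ∑ j, (if xs j = x then (1:ℝ) else 0) := by
    intro xs
    rw [kcount, Finset.card_filter]
    push_cast
    rfl
  have hS1 : ∑ xs : Fin n → X, (∏ j, σs j (xs j)) * (kcount xs x : ℝ) = m := by
    have hterm : ∀ j : Fin n,
        ∑ xs : Fin n → X, (∏ k, σs k (xs k)) * (if xs j = x then (1:ℝ) else 0)
          = σs j x := by
      intro j
      set g : Fin n → X → ℝ := fun k x' =>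
        if k = j then σs k x' * (if x' = x then (1:ℝ) else 0) else σs k x' with hg
      have hsum_ind : ∀ gg : X → ℝ, ∑ x', gg x' * (if x' = x then (1:ℝ) else 0) = gg x := by
        intro gg
        simp_rw [mul_ite, mul_one, mul_zero]
        rw [Finset.sum_ite_eq' univ x gg]
        simp
      have hprod : ∀ xs : Fin n → X,
          (∏ k, σs k (xs k)) * (if xs j = x then (1:ℝ) else 0) = ∏ k, g k (xs k) := by
        intro xs
        rw [show (if xs j = x then (1:ℝ) else 0)
            = ∏ k, (if k = j then (if xs k = x then (1:ℝ) else 0) else 1) by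
          rw [Finset.prod_ite_eq' univ j]; simp,
          ← Finset.prod_mul_distrib]
        refine Finset.prod_congr rfl fun k _ => ?_
        by_cases h : k = j <;> simp [hg, h]
      calc ∑ xs : Fin n → X, (∏ k, σs k (xs k)) * (if xs j = x then (1:ℝ) else 0)
          = ∑ xs : Fin n → X, ∏ k, g k (xs k) :=
            Finset.sum_congr rfl fun xs _ => hprod xs
        _ = ∏ k, ∑ x', g k x' := hW g
        _ = ∏ k : Fin n, (if k = j then σs j x else 1) := by
            refine Finset.prod_congr rfl fun k _ => ?_
            by_cases h : k = j
            · subst h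
              simp only [hg, eq_self_iff_true, if_true]
              exact hsum_ind (σs k)
            · simp only [hg, if_neg h]
              exact hσssum k
        _ = σs j x := by rw [Finset.prod_ite_eq' univ j]; simp
    simp_rw [hkc, Finset.mul_sum]
    rw [Finset.sum_comm]
    simp_rw [hterm]
    have : ∀ j : Fin n, σs j x = q + (if j = i then 1 - q else 0) := by
      intro j
      by_cases h : j = i
      · subst h
        rw [hσsdef, Function.update_self, hδdef]
        simp
      · rw [hσsdef, Function.update_of_ne h]
        simp [h, hqdef]
    simp_rw [this]
    rw [Finset.sum_add_distrib, Finset.sum_const, card_univ, Fintype.card_fin,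
      Finset.sum_ite_eq' univ i]
    simp only [mem_univ, if_true, nsmul_eq_mul]
    rw [hmdef]
    ring
  -- lower bound the deviation utility
  have hdev : p * c ≤ mixedUtility d Q σs i := by
    have h1 : ∑ xs : Fin n → X, (∏ j, σs j (xs j)) * (p * (2 * c - c ^ 2 * (kcount xs x : ℝ)))
        ≤ mixedUtility d Q σs i := by
      unfold mixedUtility
      exact Finset.sum_le_sum fun xs _ => hpoint xs
    have h2 : ∑ xs : Fin n → X, (∏ j, σs j (xs j)) * (p * (2 * c - c ^ 2 * (kcount xs x : ℝ)))
        = p * (2 * c) * (∑ xs : Fin n → X, ∏ j, σs j (xs j))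
          - p * c ^ 2 * (∑ xs : Fin n → X, (∏ j, σs j (xs j)) * (kcount xs x : ℝ)) := by
      rw [Finset.mul_sum, Finset.mul_sum, ← Finset.sum_sub_distrib]
      refine Finset.sum_congr rfl fun xs _ => ?_
      ring
    rw [h2, hS0, hS1] at h1
    have hcm : c * m = 1 := inv_mul_cancel₀ hm.ne'
    have heq : p * (2 * c) * 1 - p * c ^ 2 * m = p * c := by
      linear_combination (-(p * c)) * hcm
    rwa [heq] at h1
  -- combine with the Nash property
  have hfinal : p * c ≤ 1 / n := le_trans hdev (le_trans hnash' hile)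
  -- algebra
  have hcm : c * m = 1 := inv_mul_cancel₀ hm.ne'
  have hp2 : p ≤ 1 / n * m := by
    have h := mul_le_mul_of_nonneg_right hfinal hm.le
    rwa [mul_assoc, hcm, mul_one] at h
  have h3 : 1 / n * m = 1 / n - 1 / n * q + q := by
    rw [hmdef]
    field_simp
  have h4 : 0 ≤ 1 / n * q := by positivity
  show p - 1 / n ≤ q
  linarith [hp2]
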